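/- Let C ∈ M_{n-1}. The space Z²_g(p(C),V) of graded 2-cocycles (identified with the subvariety of k^{n-1} of tuples (θ_i) satisfying θ_i = θ_{n-i} and θ_{i+j}c_{ij} = θ_{j+k}c_{jk} for i+j+k=n) is a linear subspace of k^{n-1} of dimension at most u(C), the number of generic connected components of Gr(C). -/

import Mathlib

/-- Adjacency condition of the graph `Gr(C)`. -/
def adjRel {K : Type*} [Field K] (n : ℕ) (c : ℕ → ℕ → K) (p q : ℕ) : Prop :=
  p + q = n ∨ ∃ i j l, 1 ≤ i ∧ 1 ≤ j ∧ 1 ≤ l ∧ i + j + l = n ∧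
    p = i + j ∧ q = j + l ∧ c i j * c j l ≠ 0

/-- The undirected simple graph `Gr(C)` on the vertices `1,...,n-1`. -/
def grC {K : Type*} [Field K] (n : ℕ) (c : ℕ → ℕ → K) : SimpleGraph ℕ where
  Adj p q := p ≠ q ∧ (adjRel n c p q ∨ adjRel n c q p)
  symm := by refine ⟨?_⟩; intro p q h; exact ⟨h.1.symm, h.2.symm⟩
  loopless := by refine ⟨?_⟩; intro p h; exact h.1 rfl

/-- The number `u(C)` of generic connected components of `Gr(C)`: components meeting
`{1,...,n-1}` and containing no vertex `i+j` with `c_{ij} ≠ 0` and `c_{j,n-i-j} = 0`. -/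
noncomputable def uC {K : Type*} [Field K] (n : ℕ) (c : ℕ → ℕ → K) : ℕ :=
  Set.ncard {Kc : (grC n c).ConnectedComponent |
    (∃ p, 1 ≤ p ∧ p ≤ n - 1 ∧ (grC n c).connectedComponentMk p = Kc) ∧
    ∀ p i j, (grC n c).connectedComponentMk p = Kc → 1 ≤ i → 1 ≤ j → p = i + j →
      c i j ≠ 0 → c j (n - i - j) ≠ 0}

theorem stmt_13 {K : Type*} [Field K] (n : ℕ) (hn : 2 ≤ n) (c : ℕ → ℕ → K)
    (hsym : ∀ i j, c i j = c j i)
    (hassoc : ∀ i j l, 1 ≤ i → 1 ≤ j → 1 ≤ l →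
      c j l * c i (j + l) = c i j * c (i + j) l)
    (hzero : ∀ i j, i = 0 ∨ j = 0 ∨ n - 1 < i + j → c i j = 0) :
    -- the set of 2-cocycle tuples (inside k^{n-1}) is a linear subspace of
    -- dimension at most u(C)
    ∃ Z : Submodule K (ℕ → K),
      (Z : Set (ℕ → K)) =
        {t | (∀ i, i = 0 ∨ n ≤ i → t i = 0) ∧
          (∀ i, 1 ≤ i → i ≤ n - 1 → t i = t (n - i)) ∧
          (∀ i j l, 1 ≤ i → 1 ≤ j → 1 ≤ l → i + j + l = n →
            t (i + j) * c i j = t (j + l) * c j l)} ∧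
      Module.finrank K Z ≤ uC n c := by
  classical
  set Zset : Set (ℕ → K) :=
    {t | (∀ i, i = 0 ∨ n ≤ i → t i = 0) ∧
      (∀ i, 1 ≤ i → i ≤ n - 1 → t i = t (n - i)) ∧
      (∀ i j l, 1 ≤ i → 1 ≤ j → 1 ≤ l → i + j + l = n →
        t (i + j) * c i j = t (j + l) * c j l)} with hZset
  set Z : Submodule K (ℕ → K) :=
    { carrier := Zset
      add_mem' := by
        rintro a b ⟨ha0, ha1, ha2⟩ ⟨hb0, hb1, hb2⟩
        refine ⟨fun i hi => ?_, fun i h1 h2 => ?_, fun i j l h1 h2 h3 h4 => ?_⟩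
        · simp [ha0 i hi, hb0 i hi]
        · simp only [Pi.add_apply, ha1 i h1 h2, hb1 i h1 h2]
        · simp only [Pi.add_apply, add_mul, ha2 i j l h1 h2 h3 h4,
            hb2 i j l h1 h2 h3 h4]
      zero_mem' := by
        refine ⟨fun i _ => rfl, fun i _ _ => rfl, fun i j l _ _ _ _ => by simp⟩
      smul_mem' := by
        rintro a t ⟨h0, h1, h2⟩
        refine ⟨fun i hi => ?_, fun i hi1 hi2 => ?_, fun i j l h1' h2' h3' h4' => ?_⟩
        · simp [h0 i hi]
        · simp only [Pi.smul_apply, h1 i hi1 hi2]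
        · simp only [Pi.smul_apply, smul_eq_mul, mul_assoc, h2 i j l h1' h2' h3' h4'] } with hZ
  refine ⟨Z, rfl, ?_⟩
  -- zero propagation along edges
  have key : ∀ t ∈ Zset, ∀ p q : ℕ, adjRel n c p q → (t p = 0 ↔ t q = 0) := by
    rintro t ⟨h0, h1, h2⟩ p q hpq
    rcases hpq with h | ⟨i, j, l, hi, hj, hl, hijl, hp, hq, hc⟩
    · rcases Nat.eq_zero_or_pos p with hp | hp
      · subst hp
        simp [h0 0 (Or.inl rfl), h0 q (Or.inr (by omega : n ≤ q))]
      rcases Nat.eq_zero_or_pos q with hq | hq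
      · subst hq
        simp [h0 0 (Or.inl rfl), h0 p (Or.inr (by omega : n ≤ p))]
      have : t p = t q := by
        have := h1 p hp (by omega)
        rw [this]; congr 1; omega
      rw [this]
    · have hcij : c i j ≠ 0 := fun h => hc (by simp [h])
      have hcjl : c j l ≠ 0 := fun h => hc (by simp [h])
      have heq := h2 i j l hi hj hl hijl
      rw [← hp, ← hq] at heq
      constructor
      · intro h; have : t q * c j l = 0 := by rw [← heq, h, zero_mul]
        exact (mul_eq_zero.1 this).resolve_right hcjl
      · intro h; have : t p * c i j = 0 := by rw [heq, h, zero_mul]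
        exact (mul_eq_zero.1 this).resolve_right hcij
  have keyAdj : ∀ t ∈ Zset, ∀ p q : ℕ, (grC n c).Adj p q → (t p = 0 ↔ t q = 0) := by
    intro t ht p q hpq
    rcases hpq.2 with h | h
    · exact key t ht p q h
    · exact (key t ht q p h).symm
  have keyReach : ∀ t ∈ Zset, ∀ p q : ℕ, (grC n c).Reachable p q →
      (t p = 0 → t q = 0) := by
    intro t ht p q hr
    obtain ⟨w⟩ := hr
    induction w with
    | nil => exact id
    | cons h w ih => exact fun hp => ih ((keyAdj t ht _ _ h).1 hp)
  -- key vanishing on non-generic components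
  set S : Set (grC n c).ConnectedComponent :=
    {Kc : (grC n c).ConnectedComponent |
      (∃ p, 1 ≤ p ∧ p ≤ n - 1 ∧ (grC n c).connectedComponentMk p = Kc) ∧
      ∀ p i j, (grC n c).connectedComponentMk p = Kc → 1 ≤ i → 1 ≤ j → p = i + j →
        c i j ≠ 0 → c j (n - i - j) ≠ 0} with hS
  have hSfin : S.Finite := by
    have : S ⊆ (fun p => (grC n c).connectedComponentMk p) '' (Set.Icc 1 (n - 1)) := by
      rintro Kc ⟨⟨p, hp1, hp2, hp3⟩, -⟩
      exact ⟨p, ⟨hp1, hp2⟩, hp3⟩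
    exact Set.Finite.subset ((Set.finite_Icc 1 (n - 1)).image _) this
  haveI : Fintype S := hSfin.fintype
  -- the representative of each generic component
  have hrep : ∀ s : S, ∃ p, 1 ≤ p ∧ p ≤ n - 1 ∧ (grC n c).connectedComponentMk p = s.1 :=
    fun s => s.2.1
  choose rep hrep1 hrep2 hrep3 using hrep
  -- the evaluation map
  set f : Z →ₗ[K] (S → K) :=
    (LinearMap.pi fun s : S => LinearMap.proj (rep s)).comp Z.subtype with hf
  have hinj : Function.Injective f := by
    rw [injective_iff_map_eq_zero]
    rintro ⟨t, ht⟩ htf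
    have ht' : t ∈ Zset := ht
    obtain ⟨h0, h1, h2⟩ := ht'
    have hvals : ∀ s : S, t (rep s) = 0 := fun s => congrFun htf s
    ext1
    funext i
    show t i = 0
    by_cases hi : i = 0 ∨ n ≤ i
    · exact h0 i hi
    push_neg at hi
    by_cases hmem : (grC n c).connectedComponentMk i ∈ S
    · have := hvals ⟨_, hmem⟩
      refine keyReach t ht _ i ?_ this
      exact SimpleGraph.ConnectedComponent.exact (hrep3 ⟨_, hmem⟩)
    · rw [hS, Set.mem_setOf_eq] at hmem
      push_neg at hmem
      rcases hmem with hmem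
      have hmem' := hmem ⟨i, by omega, by omega, rfl⟩
      obtain ⟨p, i', j', hpKc, hi', hj', hp, hcij, hczero⟩ := hmem'
      -- t p = 0 from the cocycle condition
      have hle : i' + j' ≤ n - 1 := by
        by_contra hlt
        exact hcij (hzero i' j' (Or.inr (Or.inr (by omega))))
      set l := n - i' - j' with hl
      have hl1 : 1 ≤ l := by omega
      have hsum : i' + j' + l = n := by omega
      have hcoc := h2 i' j' l hi' hj' hl1 hsum
      rw [hczero, mul_zero] at hcoc
      have htp : t p = 0 := by
        rw [hp]
        exact (mul_eq_zero.1 hcoc).resolve_right hcij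
      exact keyReach t ht p i (SimpleGraph.ConnectedComponent.exact hpKc) htp
  haveI : Module.Finite K (S → K) := Module.Finite.pi
  calc Module.finrank K Z ≤ Module.finrank K (S → K) :=
        LinearMap.finrank_le_finrank_of_injective hinj
    _ = Fintype.card S := Module.finrank_pi K
    _ = uC n c := by
        rw [uC, ← hS, ← Nat.card_coe_set_eq, Nat.card_eq_fintype_card]
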